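/- The linearly ordered set ([0,1]^{<ω₁}_{↘0}, <_altlex) contains no subset of order type ω₁, i.e., there is no strictly increasing ω₁-sequence in this order. -/

import Mathlib

open Ordinal Set

noncomputable section

/-- Parity of an ordinal: `a = γ + n` with `γ` limit, `n < ω`; even iff `n` is even. -/
def OrdEven (a : Ordinal) : Prop := a % 2 = 0

/-- Upper semicontinuity. -/
def USC {X : Type} [TopologicalSpace X] (f : X → ℝ) : Prop :=
  ∀ r : ℝ, IsOpen (f ⁻¹' Set.Iio r)

/-- The least ordinal where two transfinite sequences differ. -/
def dOrd (f g : Ordinal → ℝ) : Ordinal := sInf {a | f a ≠ g a}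

/-- The alternating lexicographical order on transfinite sequences of reals. -/
def AltLex (f g : Ordinal → ℝ) : Prop :=
  f ≠ g ∧ ((OrdEven (dOrd f g) ∧ f (dOrd f g) < g (dOrd f g)) ∨
    (¬ OrdEven (dOrd f g) ∧ g (dOrd f g) < f (dOrd f g)))

/-- `f` encodes a strictly decreasing countable transfinite sequence in `[0,1]`
with last element `0` at index `ξ` (padded with `0` beyond `ξ`). -/
def IsDSeqLen (f : Ordinal → ℝ) (ξ : Ordinal) : Prop :=
  ξ < (Cardinal.aleph 1).ord ∧ (∀ a, f a ∈ Set.Icc (0:ℝ) 1) ∧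
  (∀ a b, a < b → b ≤ ξ → f b < f a) ∧ (∀ a, ξ ≤ a → f a = 0)

/-- Membership in `[0,1]^{<ω₁}_{↘0}`. -/
def IsDSeq (f : Ordinal → ℝ) : Prop := ∃ ξ, IsDSeqLen f ξ

namespace StmtAux

open Cardinal in
lemma _cardopen : True := trivial

open Cardinal

universe u v

/-- `w1` as an ordinal. -/
abbrev w1 : Ordinal.{u} := (Cardinal.aleph 1).ord

lemma lift_w1 : Ordinal.lift.{v, u} ((Cardinal.aleph 1).ord) =
    ((Cardinal.aleph 1).ord : Ordinal.{max u v}) := by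
  rw [Cardinal.lift_ord, Cardinal.lift_aleph, Ordinal.lift_one]

lemma omega1_limit : Order.IsSuccLimit ((Cardinal.aleph 1).ord : Ordinal.{u}) :=
  Cardinal.isSuccLimit_ord (Cardinal.aleph0_le_aleph 1)

lemma succ_lt {a : Ordinal.{u}} (h : a < w1) : a + 1 < w1 := by
  rw [Ordinal.add_one_eq_succ]; exact omega1_limit.succ_lt h

lemma self_lt_succ (a : Ordinal.{u}) : a < a + 1 := by
  rw [Ordinal.add_one_eq_succ]; exact Order.lt_succ a

/-! ### Basic facts about `dOrd` -/

lemma dOrd_lt_agree {f g : Ordinal.{u} → ℝ} {γ : Ordinal} (h : γ < dOrd f g) : f γ = g γ := by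
  by_contra hne
  exact absurd (csInf_le' (show γ ∈ {a | f a ≠ g a} from hne)) (not_le_of_gt h)

lemma dOrd_le {f g : Ordinal.{u} → ℝ} {γ : Ordinal} (h : f γ ≠ g γ) : dOrd f g ≤ γ :=
  csInf_le' h

lemma dOrd_ne {f g : Ordinal.{u} → ℝ} (h : f ≠ g) : f (dOrd f g) ≠ g (dOrd f g) :=
  csInf_mem (Function.ne_iff.mp h)

lemma dOrd_eq {f g : Ordinal.{u} → ℝ} {γ : Ordinal} (h1 : f γ ≠ g γ)
    (h2 : ∀ β, β < γ → f β = g β) : dOrd f g = γ :=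
  le_antisymm (dOrd_le h1)
    (le_csInf ⟨γ, h1⟩ fun β hβ => le_of_not_gt fun hlt => hβ (h2 β hlt))

/-! ### The splitting levels -/

variable (F : Ordinal.{u} → Ordinal.{v} → ℝ)

/-- The eventual splitting level of `F a` against later elements. -/
def eps (a : Ordinal.{u}) : Ordinal.{v} :=
  sInf {o | ∃ c, a < c ∧ c < w1 ∧ dOrd (F a) (F c) = o}

open Classical in
/-- A witness index realizing the eventual splitting level. -/
def nxt (a : Ordinal.{u}) : Ordinal.{u} :=
  if h : ∃ c, a < c ∧ c < w1 ∧ dOrd (F a) (F c) = eps F a then h.choose else 0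

lemma epsSet_nonempty {a : Ordinal.{u}} (ha : a < w1) :
    {o | ∃ c, a < c ∧ c < w1 ∧ dOrd (F a) (F c) = o}.Nonempty :=
  ⟨dOrd (F a) (F (a + 1)), a + 1, self_lt_succ a, succ_lt ha, rfl⟩

lemma nxt_spec {a : Ordinal.{u}} (ha : a < w1) :
    a < nxt F a ∧ nxt F a < w1 ∧ dOrd (F a) (F (nxt F a)) = eps F a := by
  have hmem : ∃ c, a < c ∧ c < w1 ∧ dOrd (F a) (F c) = eps F a :=
    csInf_mem (epsSet_nonempty F ha)
  rw [nxt, dif_pos hmem]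
  exact hmem.choose_spec

lemma eps_le {a c : Ordinal.{u}} (hc : a < c) (hcw : c < w1) : eps F a ≤ dOrd (F a) (F c) :=
  csInf_le' ⟨c, hc, hcw, rfl⟩

section Main

variable {F}

/-- The triangle identity for splitting levels. -/
lemma D_triangle (hinc : ∀ a b : Ordinal.{u}, a < b → b < w1 → AltLex (F a) (F b)) {a b c : Ordinal.{u}} (hab : a < b) (hbc : b < c) (hc : c < w1) :
    dOrd (F a) (F c) = min (dOrd (F a) (F b)) (dOrd (F b) (F c)) := by
  have hbw : b < w1 := hbc.trans hc
  have hAB := hinc a b hab hbw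
  have hBC := hinc b c hbc hc
  have agree : ∀ γ, γ < min (dOrd (F a) (F b)) (dOrd (F b) (F c)) → F a γ = F c γ := by
    intro γ hγ
    exact (dOrd_lt_agree (lt_of_lt_of_le hγ (min_le_left _ _))).trans
      (dOrd_lt_agree (lt_of_lt_of_le hγ (min_le_right _ _)))
  rcases lt_trichotomy (dOrd (F a) (F b)) (dOrd (F b) (F c)) with h | h | h
  · have hmin : min (dOrd (F a) (F b)) (dOrd (F b) (F c)) = dOrd (F a) (F b) :=
      min_eq_left h.le
    rw [hmin]
    have h1 : F b (dOrd (F a) (F b)) = F c (dOrd (F a) (F b)) := dOrd_lt_agree h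
    have h2 : F a (dOrd (F a) (F b)) ≠ F b (dOrd (F a) (F b)) := dOrd_ne hAB.1
    exact dOrd_eq (h1 ▸ h2) fun β hβ => agree β (by rw [hmin]; exact hβ)
  · have hmin : min (dOrd (F a) (F b)) (dOrd (F b) (F c)) = dOrd (F a) (F b) :=
      min_eq_left h.le
    rw [hmin]
    have h2 : F a (dOrd (F a) (F b)) ≠ F c (dOrd (F a) (F b)) := by
      rcases hAB.2 with ⟨he, hlt⟩ | ⟨he, hlt⟩ <;>
        rcases hBC.2 with ⟨he', hlt'⟩ | ⟨he', hlt'⟩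
      · rw [← h] at hlt'
        exact ne_of_lt (hlt.trans hlt')
      · rw [← h] at he'
        exact absurd he he'
      · rw [← h] at he'
        exact absurd he' he
      · rw [← h] at hlt'
        exact ne_of_gt (hlt'.trans hlt)
    exact dOrd_eq h2 fun β hβ => agree β (by rw [hmin]; exact hβ)
  · have hmin : min (dOrd (F a) (F b)) (dOrd (F b) (F c)) = dOrd (F b) (F c) :=
      min_eq_right h.le
    rw [hmin]
    have h1 : F a (dOrd (F b) (F c)) = F b (dOrd (F b) (F c)) := dOrd_lt_agree h
    have h2 : F b (dOrd (F b) (F c)) ≠ F c (dOrd (F b) (F c)) := dOrd_ne hBC.1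
    exact dOrd_eq (fun hh => h2 (h1 ▸ hh)) fun β hβ => agree β (by rw [hmin]; exact hβ)

lemma P1 (hinc : ∀ a b : Ordinal.{u}, a < b → b < w1 → AltLex (F a) (F b)) {a c : Ordinal.{u}} (ha : a < w1) (hc : nxt F a ≤ c) (hcw : c < w1) :
    dOrd (F a) (F c) = eps F a := by
  obtain ⟨h1, _h2, h3⟩ := nxt_spec F ha
  rcases eq_or_lt_of_le hc with rfl | hlt
  · exact h3
  · have hac : a < c := h1.trans hlt
    have htri := D_triangle hinc h1 hlt hcw
    refine le_antisymm ?_ (eps_le F hac hcw)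
    rw [htri, h3]
    exact min_le_left _ _

lemma P2 (hinc : ∀ a b : Ordinal.{u}, a < b → b < w1 → AltLex (F a) (F b)) {a b c : Ordinal.{u}} (ha : a < w1) (hb : nxt F a ≤ b) (hbc : b < c) (hcw : c < w1) :
    eps F a ≤ dOrd (F b) (F c) := by
  have hab : a < b := (nxt_spec F ha).1.trans_le hb
  have h1 : dOrd (F a) (F b) = eps F a := P1 hinc ha hb (hbc.trans hcw)
  have h2 : dOrd (F a) (F c) = eps F a := P1 hinc ha (hb.trans hbc.le) hcw
  have h3 := D_triangle hinc hab hbc hcw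
  rw [h2, h1] at h3
  exact min_eq_left_iff.mp h3.symm

lemma P3 (hinc : ∀ a b : Ordinal.{u}, a < b → b < w1 → AltLex (F a) (F b)) {a b c : Ordinal.{u}} {γ : Ordinal.{v}} (ha : a < w1) (hb : nxt F a ≤ b) (hbc : b < c) (hcw : c < w1)
    (hγ : γ < eps F a) : F b γ = F c γ :=
  dOrd_lt_agree (hγ.trans_le (P2 hinc ha hb hbc hcw))

end Main

/-! ### No strictly increasing `w1`-sequence of reals -/

/-- The order type of an element of `o.ToType`. -/
def tpin {o : Ordinal.{u}} (i : o.ToType) : Ordinal.{u} :=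
  @Ordinal.typein o.ToType (· < ·) isWellOrder_lt i

lemma tpin_lt_self {o : Ordinal.{u}} (i : o.ToType) : tpin i < o := Ordinal.typein_lt_self i

lemma tpin_lt_tpin {o : Ordinal.{u}} {i j : o.ToType} (h : i < j) : tpin i < tpin j :=
  (Ordinal.typein_lt_typein (α := o.ToType) (· < ·) (a := i) (b := j)).mpr h

lemma no_mono (t : Ordinal.{u} → ℝ) (h : ∀ i j, i < j → j < w1 → t i < t j) : False := by
  have hmono : ∀ i j, i ≤ j → j < w1 → t i ≤ t j := by
    intro i j hij hj
    rcases hij.lt_or_eq with hlt | rfl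
    · exact (h i j hlt hj).le
    · exact le_rfl
  have key : ∀ i : ((Cardinal.aleph 1).ord : Ordinal.{u}).ToType,
      ∃ q : ℚ, t (tpin i) < q ∧ (q : ℝ) < t (tpin i + 1) := by
    intro i
    have h1 : tpin i < w1 := tpin_lt_self i
    exact exists_rat_btwn (h _ _ (self_lt_succ _) (succ_lt h1))
  choose q hq1 hq2 using key
  have hsm : ∀ i j : ((Cardinal.aleph 1).ord : Ordinal.{u}).ToType, i < j → q i < q j := by
    intro i j hij
    have htlt : tpin i < tpin j := tpin_lt_tpin hij
    have hle : tpin i + 1 ≤ tpin j := by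
      rw [Ordinal.add_one_eq_succ]; exact Order.succ_le_of_lt htlt
    have : (q i : ℝ) < q j :=
      (hq2 i).trans_le ((hmono _ _ hle (tpin_lt_self j)).trans (hq1 j).le)
    exact_mod_cast this
  have hinj : Function.Injective q := by
    intro i j hij
    rcases lt_trichotomy i j with hlt | he | hlt
    · exact absurd hij (ne_of_lt (hsm _ _ hlt))
    · exact he
    · exact absurd hij.symm (ne_of_lt (hsm _ _ hlt))
  have hinj' : Function.Injective (fun i => (ULift.up.{u} (q i))) := fun i j hij =>
    hinj (congrArg ULift.down hij)
  have hle : #((Cardinal.aleph 1).ord : Ordinal.{u}).ToType ≤ #(ULift.{u} ℚ) :=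
    Cardinal.mk_le_of_injective hinj'
  rw [Cardinal.mk_toType, Cardinal.card_ord, Cardinal.mk_uLift,
    Cardinal.mk_denumerable ℚ, Cardinal.lift_aleph0] at hle
  exact absurd hle Cardinal.aleph0_lt_aleph_one.not_ge

lemma zero_tail {f : Ordinal.{u} → ℝ} (hf : IsDSeq f) {γ₀ γ : Ordinal} (h0 : f γ₀ = 0)
    (hγ : γ₀ ≤ γ) : f γ = 0 := by
  obtain ⟨ξ, _hξω, hIcc, hdec, hzero⟩ := hf
  have hξ : ξ ≤ γ₀ := by
    by_contra hlt
    push_neg at hlt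
    have := hdec γ₀ ξ hlt le_rfl
    rw [h0] at this
    exact absurd (hIcc ξ).1 (not_le_of_gt this)
  exact hzero γ (hξ.trans hγ)

/-- Transfinite thinning-out construction. -/
def thin (A : Set Ordinal.{u}) (g : Ordinal.{u} → Ordinal.{u}) : Ordinal.{u} → Ordinal.{u} :=
  Ordinal.lt_wf.fix fun i rec => sInf {c | c ∈ A ∧ ∀ j, ∀ hj : j < i, g (rec j hj) ≤ c}

lemma thin_eq (A : Set Ordinal.{u}) (g : Ordinal.{u} → Ordinal.{u}) (i : Ordinal.{u}) :
    thin A g i = sInf {c | c ∈ A ∧ ∀ j, j < i → g (thin A g j) ≤ c} := by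
  rw [thin, WellFounded.fix_eq]

end StmtAux


theorem stmt_3 :
    ¬ ∃ F : Ordinal → Ordinal → ℝ,
      (∀ a, a < (Cardinal.aleph 1).ord → IsDSeq (F a)) ∧
      (∀ a b, a < b → b < (Cardinal.aleph 1).ord → AltLex (F a) (F b)) := by
  rintro ⟨F, hseq, hinc⟩
  classical
  by_cases hB : ∃ Γ, Γ < (Cardinal.aleph 1).ord ∧
      ∀ a, a < (Cardinal.aleph 1).ord → StmtAux.eps F a ≤ Γ
  · -- Case 1: the splitting levels are bounded below `ω₁`.
    obtain ⟨Γ, hΓw, hΓ⟩ := hB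
    have hv : ∃ v, ∀ β, β < (Cardinal.aleph 1).ord →
        ∃ a, β ≤ a ∧ a < (Cardinal.aleph 1).ord ∧ StmtAux.eps F a = v := by
      by_contra hcon
      push_neg at hcon
      choose bnd hbnd1 hbnd2 using hcon
      have hcard : Cardinal.lift.{u_1, u_2} ((Γ + 1).card) < Cardinal.aleph 1 := by
        have h0 : (Γ + 1).card < Cardinal.aleph 1 := Cardinal.lt_ord.mp (StmtAux.succ_lt hΓw)
        have h1 := Cardinal.lift_lt.mpr h0
        rwa [Cardinal.lift_aleph, Ordinal.lift_one] at h1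
      have hBw : Ordinal.bsup (Γ + 1) (fun w _ => Ordinal.lift.{u_2, u_1} (bnd w)) <
          (Cardinal.aleph 1).ord := by
        apply Cardinal.bsup_lt_ord_lift_of_isRegular Cardinal.isRegular_aleph_one hcard
        intro w _
        rw [← StmtAux.lift_w1.{u_1, u_2}]
        exact Ordinal.lift_lt.mpr (hbnd1 w)
      rw [← StmtAux.lift_w1.{u_1, u_2}] at hBw
      obtain ⟨B, hBlt, hBeq⟩ := Ordinal.lt_lift_iff.mp hBw
      have hec : StmtAux.eps F B ≤ Γ := hΓ B hBlt
      have hlt : StmtAux.eps F B < Γ + 1 := lt_of_le_of_lt hec (StmtAux.self_lt_succ Γ)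
      have hle : bnd (StmtAux.eps F B) ≤ B := by
        have := Ordinal.le_bsup (fun w (_ : w < Γ + 1) => Ordinal.lift.{u_2, u_1} (bnd w))
          (StmtAux.eps F B) hlt
        rw [← hBeq] at this
        exact Ordinal.lift_le.mp this
      exact hbnd2 (StmtAux.eps F B) B hle hBlt rfl
    obtain ⟨v, hv⟩ := hv
    set A : Set Ordinal := {a | a < (Cardinal.aleph 1).ord ∧ StmtAux.eps F a = v} with hA
    set g : Ordinal → Ordinal := fun a => max (a + 1) (StmtAux.nxt F a) with hg
    have main : ∀ i, i < (Cardinal.aleph 1).ord →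
        StmtAux.thin A g i ∈ A ∧ ∀ j, j < i → g (StmtAux.thin A g j) ≤ StmtAux.thin A g i := by
      intro i
      induction i using Ordinal.induction with
      | _ i IH =>
      intro hi
      have hfam : ∀ j (hj : j < i), g (StmtAux.thin A g j) < (Cardinal.aleph 1).ord := by
        intro j hj
        have hj' := IH j hj (hj.trans hi)
        have hjA : StmtAux.thin A g j < (Cardinal.aleph 1).ord := hj'.1.1
        exact max_lt (StmtAux.succ_lt hjA) (StmtAux.nxt_spec F hjA).2.1
      have hβw : Ordinal.bsup i (fun j hj => g (StmtAux.thin A g j)) < (Cardinal.aleph 1).ord :=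
        Cardinal.bsup_lt_ord_of_isRegular Cardinal.isRegular_aleph_one
          (Cardinal.lt_ord.mp hi) hfam
      obtain ⟨cA, hcA1, hcA2, hcA3⟩ := hv _ hβw
      have hne : {c | c ∈ A ∧ ∀ j, j < i → g (StmtAux.thin A g j) ≤ c}.Nonempty :=
        ⟨cA, ⟨hcA2, hcA3⟩, fun j hj => (Ordinal.le_bsup _ j hj).trans hcA1⟩
      have hmem := csInf_mem hne
      rw [← StmtAux.thin_eq] at hmem
      exact hmem
    have hstep : ∀ i j, i < j → j < (Cardinal.aleph 1).ord →
        dOrd (F (StmtAux.thin A g i)) (F (StmtAux.thin A g j)) = v := by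
      intro i j hij hj
      have hi := hij.trans hj
      obtain ⟨hiA, _⟩ := main i hi
      obtain ⟨hjA, hjg⟩ := main j hj
      have hnle : StmtAux.nxt F (StmtAux.thin A g i) ≤ StmtAux.thin A g j :=
        le_trans (le_max_right _ _) (hjg i hij)
      rw [StmtAux.P1 hinc hiA.1 hnle hjA.1, hiA.2]
    have hltth : ∀ i j, i < j → j < (Cardinal.aleph 1).ord →
        StmtAux.thin A g i < StmtAux.thin A g j := by
      intro i j hij hj
      have hgle := (main j hj).2 i hij
      exact lt_of_lt_of_le (lt_of_lt_of_le (StmtAux.self_lt_succ _) (le_max_left _ _)) hgle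
    by_cases hev : OrdEven v
    · refine StmtAux.no_mono (fun i => F (StmtAux.thin A g i) v) ?_
      intro i j hij hj
      have hAL := hinc _ _ (hltth i j hij hj) (main j hj).1.1
      rcases hAL.2 with ⟨_, hlt⟩ | ⟨hne, _⟩
      · rwa [hstep i j hij hj] at hlt
      · rw [hstep i j hij hj] at hne
        exact absurd hev hne
    · refine StmtAux.no_mono (fun i => -(F (StmtAux.thin A g i) v)) ?_
      intro i j hij hj
      have hAL := hinc _ _ (hltth i j hij hj) (main j hj).1.1
      rcases hAL.2 with ⟨hne, _⟩ | ⟨_, hlt⟩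
      · rw [hstep i j hij hj] at hne
        exact absurd hne hev
      · rw [hstep i j hij hj] at hlt
        exact neg_lt_neg hlt
  · -- Case 2: the splitting levels are unbounded in `ω₁`.
    push_neg at hB
    choose idx hidx1 hidx2 using hB
    by_cases hz : ∀ γ, ∀ h : γ < (Cardinal.aleph 1).ord, F (StmtAux.nxt F (idx γ h)) γ ≠ 0
    · -- the limit sequence is everywhere nonzero: strictly decreasing `ω₁`-sequence of reals
      refine StmtAux.no_mono (fun γ =>
        if h : γ < (Cardinal.aleph 1).ord then -(F (StmtAux.nxt F (idx γ h)) γ) else 0) ?_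
      intro γ γ' hγγ' hγ'
      have hγ : γ < (Cardinal.aleph 1).ord := hγγ'.trans hγ'
      simp only [dif_pos hγ, dif_pos hγ']
      apply neg_lt_neg
      have hi1 := hidx1 γ hγ
      have hi2 := hidx1 γ' hγ'
      set m := max (StmtAux.nxt F (idx γ hγ)) (StmtAux.nxt F (idx γ' hγ')) with hm
      have hmw : m < (Cardinal.aleph 1).ord :=
        max_lt (StmtAux.nxt_spec F hi1).2.1 (StmtAux.nxt_spec F hi2).2.1
      have e1 : F m γ = F (StmtAux.nxt F (idx γ hγ)) γ := by
        rcases eq_or_lt_of_le (le_max_left (StmtAux.nxt F (idx γ hγ))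
            (StmtAux.nxt F (idx γ' hγ'))) with heq | hlt
        · rw [hm, ← heq]
        · exact (StmtAux.P3 hinc hi1 le_rfl hlt hmw (hidx2 γ hγ)).symm
      have e2 : F m γ' = F (StmtAux.nxt F (idx γ' hγ')) γ' := by
        rcases eq_or_lt_of_le (le_max_right (StmtAux.nxt F (idx γ hγ))
            (StmtAux.nxt F (idx γ' hγ'))) with heq | hlt
        · rw [hm, ← heq]
        · exact (StmtAux.P3 hinc hi2 le_rfl hlt hmw (hidx2 γ' hγ')).symm
      obtain ⟨ξ, hξω, hIcc, hdec, hzero⟩ := hseq m hmw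
      have hne0 : F m γ' ≠ 0 := by rw [e2]; exact hz γ' hγ'
      have hγ'ξ : γ' ≤ ξ := by
        by_contra hcon
        push_neg at hcon
        exact hne0 (hzero γ' hcon.le)
      have hlt2 := hdec γ γ' hγγ' hγ'ξ
      rw [e1, e2] at hlt2
      exact hlt2
    · -- the limit sequence hits `0`: two elements coincide
      push_neg at hz
      obtain ⟨γ₀, hγ₀, hx0⟩ := hz
      have hi0 := hidx1 γ₀ hγ₀
      set m := StmtAux.nxt F (idx γ₀ hγ₀) with hm
      have hmw : m < (Cardinal.aleph 1).ord := (StmtAux.nxt_spec F hi0).2.1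
      have hm1 : m + 1 < (Cardinal.aleph 1).ord := StmtAux.succ_lt hmw
      have hmm : m < m + 1 := StmtAux.self_lt_succ m
      have hb0 : F m γ₀ = 0 := hx0
      have hc0 : F (m + 1) γ₀ = 0 := by
        rw [← hx0]
        exact (StmtAux.P3 hinc hi0 le_rfl hmm hm1 (hidx2 γ₀ hγ₀)).symm
      have heq : F m = F (m + 1) := funext fun γ => by
        rcases lt_or_ge γ (StmtAux.eps F (idx γ₀ hγ₀)) with hγe | hγe
        · exact StmtAux.P3 hinc hi0 le_rfl hmm hm1 hγe
        · have hγ₀γ : γ₀ ≤ γ := ((hidx2 γ₀ hγ₀).trans_le hγe).le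
          rw [StmtAux.zero_tail (hseq m hmw) hb0 hγ₀γ,
            StmtAux.zero_tail (hseq (m + 1) hm1) hc0 hγ₀γ]
      exact (hinc m (m + 1) hmm hm1).1 heq
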